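/- In the zero-noise setting, the MMSE-optimal filter achieves perfect signal recovery: if Y = x·h + x'·h' with h, h' linearly independent in ℂⁿ, x and x' independent zero-mean random variables with E[|x|²] > 0, E[|x'|²] > 0, then the filter G = E[YY*]⁺ E[Y x̄] satisfies ⟨G, Y⟩ = x almost surely. -/

import Mathlib

open MeasureTheory Matrix Finset
open scoped ComplexConjugate BigOperators

noncomputable section

/-- Hermitian inner product on `Fin n → ℂ`, conjugate-linear in the first slot. -/
def herm {n : ℕ} (G Y : Fin n → ℂ) : ℂ := ∑ i, conj (G i) * Y i

/-- Squared Euclidean norm. -/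
def sqNorm {n : ℕ} (G : Fin n → ℂ) : ℝ := ∑ i, ‖G i‖ ^ 2

/-- The four Penrose conditions: `Rp` is the Moore–Penrose pseudoinverse of `R`. -/
def IsPinv {n : ℕ} (R Rp : Matrix (Fin n) (Fin n) ℂ) : Prop :=
  R * Rp * R = R ∧ Rp * R * Rp = Rp ∧ (R * Rp)ᴴ = R * Rp ∧ (Rp * R)ᴴ = Rp * R

/-- Mean square error `E[|⟨G,Y⟩ − X|²]`. -/
def mse {n : ℕ} {Ω : Type} [MeasurableSpace Ω] (μ : Measure Ω)
    (Y : Ω → Fin n → ℂ) (X : Ω → ℂ) (G : Fin n → ℂ) : ℝ :=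
  ∫ ω, ‖herm G (Y ω) - X ω‖ ^ 2 ∂μ

/-- Second-moment matrix `R = E[Y Y*]`. -/
def secondMoment {n : ℕ} {Ω : Type} [MeasurableSpace Ω] (μ : Measure Ω)
    (Y : Ω → Fin n → ℂ) : Matrix (Fin n) (Fin n) ℂ :=
  Matrix.of fun i j => ∫ ω, Y ω i * conj (Y ω j) ∂μ

/-- Cross-correlation vector `r = E[Y conj(X)]`. -/
def crossCorr {n : ℕ} {Ω : Type} [MeasurableSpace Ω] (μ : Measure Ω)
    (Y : Ω → Fin n → ℂ) (X : Ω → ℂ) : Fin n → ℂ :=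
  fun i => ∫ ω, Y ω i * conj (X ω) ∂μ

open ProbabilityTheory in
lemma indep_integral_mul_cplx {Ω : Type} [MeasurableSpace Ω] {μ : Measure Ω}
    {f g : Ω → ℂ} (hfg : IndepFun f g μ)
    (hf : Integrable f μ) (hg : Integrable g μ)
    (hprod : Integrable (fun ω => f ω * g ω) μ) :
    ∫ ω, f ω * g ω ∂μ = (∫ ω, f ω ∂μ) * ∫ ω, g ω ∂μ := by
  have hA : Integrable (fun ω => (f ω).re) μ := by simpa using hf.re
  have hB : Integrable (fun ω => (f ω).im) μ := by simpa using hf.im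
  have hC : Integrable (fun ω => (g ω).re) μ := by simpa using hg.re
  have hD : Integrable (fun ω => (g ω).im) μ := by simpa using hg.im
  have iAC : IndepFun (fun ω => (f ω).re) (fun ω => (g ω).re) μ :=
    hfg.comp Complex.measurable_re Complex.measurable_re
  have iAD : IndepFun (fun ω => (f ω).re) (fun ω => (g ω).im) μ :=
    hfg.comp Complex.measurable_re Complex.measurable_im
  have iBC : IndepFun (fun ω => (f ω).im) (fun ω => (g ω).re) μ :=
    hfg.comp Complex.measurable_im Complex.measurable_re
  have iBD : IndepFun (fun ω => (f ω).im) (fun ω => (g ω).im) μ :=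
    hfg.comp Complex.measurable_im Complex.measurable_im
  have hAC : ∫ ω, (f ω).re * (g ω).re ∂μ = (∫ ω, (f ω).re ∂μ) * ∫ ω, (g ω).re ∂μ :=
    iAC.integral_mul_eq_mul_integral hA.1 hC.1
  have hAD : ∫ ω, (f ω).re * (g ω).im ∂μ = (∫ ω, (f ω).re ∂μ) * ∫ ω, (g ω).im ∂μ :=
    iAD.integral_mul_eq_mul_integral hA.1 hD.1
  have hBC : ∫ ω, (f ω).im * (g ω).re ∂μ = (∫ ω, (f ω).im ∂μ) * ∫ ω, (g ω).re ∂μ :=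
    iBC.integral_mul_eq_mul_integral hB.1 hC.1
  have hBD : ∫ ω, (f ω).im * (g ω).im ∂μ = (∫ ω, (f ω).im ∂μ) * ∫ ω, (g ω).im ∂μ :=
    iBD.integral_mul_eq_mul_integral hB.1 hD.1
  have iACi : Integrable (fun ω => (f ω).re * (g ω).re) μ := iAC.integrable_mul hA hC
  have iADi : Integrable (fun ω => (f ω).re * (g ω).im) μ := iAD.integrable_mul hA hD
  have iBCi : Integrable (fun ω => (f ω).im * (g ω).re) μ := iBC.integrable_mul hB hC
  have iBDi : Integrable (fun ω => (f ω).im * (g ω).im) μ := iBD.integrable_mul hB hD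
  have hfre := integral_re hf
  have hfim := integral_im hf
  have hgre := integral_re hg
  have hgim := integral_im hg
  have hpre := integral_re hprod
  have hpim := integral_im hprod
  simp only [RCLike.re_to_complex, RCLike.im_to_complex] at hfre hfim hgre hgim hpre hpim
  apply Complex.ext
  · rw [← hpre]
    simp only [Complex.mul_re]
    rw [integral_sub iACi iBDi, hAC, hBD, ← hfre, ← hfim, ← hgre, ← hgim]
  · rw [← hpim]
    simp only [Complex.mul_im]
    rw [integral_add iADi iBCi, hAD, hBC, ← hfre, ← hfim, ← hgre, ← hgim]

lemma memLp_conj {Ω : Type} [MeasurableSpace Ω] {μ : Measure Ω} {f : Ω → ℂ}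
    (hf : MemLp f 2 μ) : MemLp (fun ω => conj (f ω)) 2 μ :=
  hf.of_le ((Complex.continuous_conj).comp_aestronglyMeasurable hf.1)
    (Filter.Eventually.of_forall fun ω => by simp)

lemma l2_mul_integrable {Ω : Type} [MeasurableSpace Ω] {μ : Measure Ω} {f g : Ω → ℂ}
    (hf : MemLp f 2 μ) (hg : MemLp g 2 μ) : Integrable (fun ω => f ω * g ω) μ := by
  have h : (1 : ENNReal) / 1 = 1 / 2 + 1 / 2 := by
    rw [ENNReal.div_add_div_same]
    norm_num [ENNReal.div_self, div_one]
  have := hg.smul (φ := f) (r := 1) hf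
  rw [← memLp_one_iff_integrable]
  exact this

theorem bic_perfect_recovery {n : ℕ} (hn : 2 ≤ n) {Ω : Type} [MeasurableSpace Ω]
    (μ : Measure Ω) [IsProbabilityMeasure μ]
    (h h' : Fin n → ℂ) (hli : LinearIndependent ℂ ![h, h'])
    (x x' : Ω → ℂ) (hx2 : MemLp x 2 μ) (hx'2 : MemLp x' 2 μ)
    (hindep : ProbabilityTheory.IndepFun x x' μ)
    (hmx : ∫ ω, x ω ∂μ = 0) (hmx' : ∫ ω, x' ω ∂μ = 0)
    (hvx : 0 < ∫ ω, ‖x ω‖ ^ 2 ∂μ) (hvx' : 0 < ∫ ω, ‖x' ω‖ ^ 2 ∂μ)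
    (Y : Ω → Fin n → ℂ) (hYdef : ∀ ω, Y ω = x ω • h + x' ω • h')
    (Rp : Matrix (Fin n) (Fin n) ℂ) (hRp : IsPinv (secondMoment μ Y) Rp) :
    ∀ᵐ ω ∂μ, herm (Rp.mulVec (crossCorr μ Y x)) (Y ω) = x ω := by
  classical
  -- integrability
  have hxc : MemLp (fun ω => conj (x ω)) 2 μ := memLp_conj hx2
  have hx'c : MemLp (fun ω => conj (x' ω)) 2 μ := memLp_conj hx'2
  have hxx : Integrable (fun ω => x ω * conj (x ω)) μ := l2_mul_integrable hx2 hxc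
  have hxx' : Integrable (fun ω => x ω * conj (x' ω)) μ := l2_mul_integrable hx2 hx'c
  have hx'x : Integrable (fun ω => x' ω * conj (x ω)) μ := l2_mul_integrable hx'2 hxc
  have hx'x' : Integrable (fun ω => x' ω * conj (x' ω)) μ := l2_mul_integrable hx'2 hx'c
  have hint_x : Integrable x μ := hx2.integrable one_le_two
  have hint_x' : Integrable x' μ := hx'2.integrable one_le_two
  have hint_xc : Integrable (fun ω => conj (x ω)) μ := hxc.integrable one_le_two
  have hint_x'c : Integrable (fun ω => conj (x' ω)) μ := hx'c.integrable one_le_two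
  set a : ℂ := ∫ ω, x ω * conj (x ω) ∂μ with ha_def
  set b : ℂ := ∫ ω, x' ω * conj (x' ω) ∂μ with hb_def
  have hconj_meas : Measurable (starRingEnd ℂ) := Complex.continuous_conj.measurable
  -- cross correlations vanish
  have hcross1 : ∫ ω, x ω * conj (x' ω) ∂μ = 0 := by
    have hi : ProbabilityTheory.IndepFun x (fun ω => conj (x' ω)) μ :=
      hindep.comp measurable_id hconj_meas
    rw [indep_integral_mul_cplx hi hint_x hint_x'c hxx', hmx, zero_mul]
  have hcross2 : ∫ ω, x' ω * conj (x ω) ∂μ = 0 := by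
    have hi : ProbabilityTheory.IndepFun x' (fun ω => conj (x ω)) μ :=
      hindep.symm.comp measurable_id hconj_meas
    rw [indep_integral_mul_cplx hi hint_x' hint_xc hx'x, hmx', zero_mul]
  -- a, b are real and positive
  have hsqc : ∀ g : Ω → ℂ, (fun ω => g ω * conj (g ω)) = fun ω => ((‖g ω‖ ^ 2 : ℝ) : ℂ) := by
    intro g
    funext ω
    rw [Complex.mul_conj]
    norm_cast
    simp [Complex.normSq_eq_norm_sq]
  have haR : a = ((∫ ω, ‖x ω‖ ^ 2 ∂μ : ℝ) : ℂ) := by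
    rw [ha_def, hsqc x]
    exact integral_ofReal
  have hbR : b = ((∫ ω, ‖x' ω‖ ^ 2 ∂μ : ℝ) : ℂ) := by
    rw [hb_def, hsqc x']
    exact integral_ofReal
  have ha0 : a ≠ 0 := by rw [haR]; exact_mod_cast ne_of_gt hvx
  have hb0 : b ≠ 0 := by rw [hbR]; exact_mod_cast ne_of_gt hvx'
  have hac : conj a = a := by rw [haR]; exact Complex.conj_ofReal _
  have hbc : conj b = b := by rw [hbR]; exact Complex.conj_ofReal _
  clear_value a b
  set R : Matrix (Fin n) (Fin n) ℂ := secondMoment μ Y with hRdef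
  -- matrix entries
  have hR : ∀ i j, R i j = a * (h i * conj (h j)) + b * (h' i * conj (h' j)) := by
    intro i j
    have hptw : (fun ω => Y ω i * conj (Y ω j)) = fun ω =>
        (x ω * conj (x ω)) * (h i * conj (h j)) + (x ω * conj (x' ω)) * (h i * conj (h' j)) +
        ((x' ω * conj (x ω)) * (h' i * conj (h j)) +
          (x' ω * conj (x' ω)) * (h' i * conj (h' j))) := by
      funext ω
      rw [hYdef ω]
      simp only [Pi.add_apply, Pi.smul_apply, smul_eq_mul, _root_.map_add, _root_.map_mul]
      ring
    have i1 : Integrable (fun ω => (x ω * conj (x ω)) * (h i * conj (h j))) μ :=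
      hxx.mul_const _
    have i2 : Integrable (fun ω => (x ω * conj (x' ω)) * (h i * conj (h' j))) μ :=
      hxx'.mul_const _
    have i3 : Integrable (fun ω => (x' ω * conj (x ω)) * (h' i * conj (h j))) μ :=
      hx'x.mul_const _
    have i4 : Integrable (fun ω => (x' ω * conj (x' ω)) * (h' i * conj (h' j))) μ :=
      hx'x'.mul_const _
    have i12 : Integrable (fun ω => (x ω * conj (x ω)) * (h i * conj (h j)) +
        (x ω * conj (x' ω)) * (h i * conj (h' j))) μ := i1.add i2
    have i34 : Integrable (fun ω => (x' ω * conj (x ω)) * (h' i * conj (h j)) +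
        (x' ω * conj (x' ω)) * (h' i * conj (h' j))) μ := i3.add i4
    show (∫ ω, Y ω i * conj (Y ω j) ∂μ) = _
    rw [hptw, integral_add i12 i34, integral_add i1 i2, integral_add i3 i4,
      integral_mul_const, integral_mul_const, integral_mul_const, integral_mul_const,
      hcross1, hcross2, zero_mul, zero_mul, add_zero, zero_add, ← ha_def, ← hb_def]
  -- cross-correlation vector
  have hr : crossCorr μ Y x = fun i => a * h i := by
    funext i
    show (∫ ω, Y ω i * conj (x ω) ∂μ) = _
    have hptw : (fun ω => Y ω i * conj (x ω)) = fun ω =>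
        (x ω * conj (x ω)) * h i + (x' ω * conj (x ω)) * h' i := by
      funext ω
      rw [hYdef ω]
      simp only [Pi.add_apply, Pi.smul_apply, smul_eq_mul]
      ring
    have i1 : Integrable (fun ω => (x ω * conj (x ω)) * h i) μ := hxx.mul_const _
    have i2 : Integrable (fun ω => (x' ω * conj (x ω)) * h' i) μ := hx'x.mul_const _
    rw [hptw, integral_add i1 i2, integral_mul_const,
      integral_mul_const, hcross2, zero_mul, add_zero, ← ha_def]
  -- Gram scalars
  set α : ℂ := ∑ i, conj (h i) * h i with hα
  set β : ℂ := ∑ i, conj (h i) * h' i with hβ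
  set γ : ℂ := ∑ i, conj (h' i) * h i with hγ
  set δ : ℂ := ∑ i, conj (h' i) * h' i with hδ
  clear_value α β γ δ
  -- mulVec formula
  have hmv : ∀ v : Fin n → ℂ, R.mulVec v = fun i =>
      (a * ∑ j, conj (h j) * v j) * h i + (b * ∑ j, conj (h' j) * v j) * h' i := by
    intro v
    funext i
    simp only [Matrix.mulVec, dotProduct]
    calc ∑ j, R i j * v j
        = ∑ j, ((a * h i) * (conj (h j) * v j) + (b * h' i) * (conj (h' j) * v j)) := by
          refine Finset.sum_congr rfl fun j _ => ?_
          rw [hR i j]; ring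
      _ = (a * h i) * (∑ j, conj (h j) * v j) + (b * h' i) * ∑ j, conj (h' j) * v j := by
          rw [Finset.sum_add_distrib, ← Finset.mul_sum, ← Finset.mul_sum]
      _ = _ := by ring
  -- linear independence facts
  have hpair := LinearIndependent.pair_iff.mp hli
  have hD : α * δ - β * γ ≠ 0 := by
    set H : EuclideanSpace ℂ (Fin n) := (WithLp.equiv 2 (Fin n → ℂ)).symm h with hH
    set H' : EuclideanSpace ℂ (Fin n) := (WithLp.equiv 2 (Fin n → ℂ)).symm h' with hH'
    have hinnerHH' : (inner ℂ H H' : ℂ) = β := by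
      simp only [hH, hH', hβ, PiLp.inner_apply, RCLike.inner_apply, WithLp.equiv_symm_apply, PiLp.toLp_apply, mul_comm]
    have hinnerHH : (inner ℂ H H : ℂ) = α := by
      simp only [hH, hα, PiLp.inner_apply, RCLike.inner_apply, WithLp.equiv_symm_apply, PiLp.toLp_apply, mul_comm]
    have hinnerH'H' : (inner ℂ H' H' : ℂ) = δ := by
      simp only [hH', hδ, PiLp.inner_apply, RCLike.inner_apply, WithLp.equiv_symm_apply, PiLp.toLp_apply, mul_comm]
    have hH0 : H ≠ 0 := by
      intro hz
      have hh0 : h = 0 := by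
        have := congrArg (WithLp.equiv 2 (Fin n → ℂ)) hz
        simpa [hH] using this
      have := (hpair 1 0 (by simp [hh0])).1
      norm_num at this
    have hH'0 : H' ≠ 0 := by
      intro hz
      have hh0 : h' = 0 := by
        have := congrArg (WithLp.equiv 2 (Fin n → ℂ)) hz
        simpa [hH'] using this
      have := (hpair 0 1 (by simp [hh0])).2
      norm_num at this
    have hlt : ‖(inner ℂ H H' : ℂ)‖ < ‖H‖ * ‖H'‖ := by
      refine lt_of_le_of_ne (norm_inner_le_norm H H') fun he => ?_
      obtain ⟨r, hr0, hr⟩ := (norm_inner_eq_norm_iff hH0 hH'0).mp he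
      have hh' : h' = r • h := by
        have := congrArg (WithLp.equiv 2 (Fin n → ℂ)) hr
        simpa [hH, hH', WithLp.ofLp_smul] using this
      have := (hpair r (-1) (by rw [hh']; simp)).2
      norm_num at this
    have hγβ : γ = conj β := by
      rw [hγ, hβ, _root_.map_sum]
      refine Finset.sum_congr rfl fun i _ => ?_
      rw [_root_.map_mul, Complex.conj_conj]
      ring
    have hαδ : α * δ = ((‖H‖ ^ 2 * ‖H'‖ ^ 2 : ℝ) : ℂ) := by
      rw [← hinnerHH, ← hinnerH'H', inner_self_eq_norm_sq_to_K, inner_self_eq_norm_sq_to_K]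
      push_cast
      norm_num
    have hβγ : β * γ = ((‖(inner ℂ H H' : ℂ)‖ ^ 2 : ℝ) : ℂ) := by
      rw [hγβ, ← hinnerHH', Complex.mul_conj]
      norm_cast
      simp [Complex.normSq_eq_norm_sq]
    rw [hαδ, hβγ, ← Complex.ofReal_sub, Complex.ofReal_ne_zero]
    have hlt2 : ‖(inner ℂ H H' : ℂ)‖ ^ 2 < ‖H‖ ^ 2 * ‖H'‖ ^ 2 := by
      rw [← mul_pow]
      exact pow_lt_pow_left₀ hlt (norm_nonneg _) two_ne_zero
    linarith
  -- Penrose conditions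
  obtain ⟨hP1, hP2, hP3, hP4⟩ := hRp
  have hRherm : Rᴴ = R := by
    ext i j
    simp only [Matrix.conjTranspose_apply]
    rw [hR j i, hR i j]
    simp only [Complex.star_def, _root_.map_add, _root_.map_mul, Complex.conj_conj, hac, hbc]
    ring
  have hkey : Rpᴴ * R = R * Rp := by
    calc Rpᴴ * R = Rpᴴ * Rᴴ := by rw [hRherm]
      _ = (R * Rp)ᴴ := (Matrix.conjTranspose_mul R Rp).symm
      _ = R * Rp := hP3
  -- action of R on combinations of h, h'
  have hmvcd : ∀ c d : ℂ, R.mulVec (fun i => c * h i + d * h' i) =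
      fun i => (a * (α * c + β * d)) * h i + (b * (γ * c + δ * d)) * h' i := by
    intro c d
    rw [hmv]
    funext i
    have s1 : ∑ j, conj (h j) * (c * h j + d * h' j) = α * c + β * d := by
      rw [hα, hβ, Finset.sum_mul, Finset.sum_mul, ← Finset.sum_add_distrib]
      exact Finset.sum_congr rfl fun j _ => by ring
    have s2 : ∑ j, conj (h' j) * (c * h j + d * h' j) = γ * c + δ * d := by
      rw [hγ, hδ, Finset.sum_mul, Finset.sum_mul, ← Finset.sum_add_distrib]
      exact Finset.sum_congr rfl fun j _ => by ring
    rw [s1, s2]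
  -- h and h' lie in the range of R
  have hwh : R.mulVec (fun i => (δ / (a * (α * δ - β * γ))) * h i +
      (-γ / (a * (α * δ - β * γ))) * h' i) = h := by
    rw [hmvcd]
    funext i
    have e1 : a * (α * (δ / (a * (α * δ - β * γ))) + β * (-γ / (a * (α * δ - β * γ)))) = 1 := by
      field_simp
      try ring
      try exact Or.inl (by ring)
    have e2 : b * (γ * (δ / (a * (α * δ - β * γ))) + δ * (-γ / (a * (α * δ - β * γ)))) = 0 := by
      field_simp
      try ring
      try exact Or.inl (by ring)
    rw [e1, e2]
    ring
  have hwh' : R.mulVec (fun i => (-β / (b * (α * δ - β * γ))) * h i +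
      (α / (b * (α * δ - β * γ))) * h' i) = h' := by
    rw [hmvcd]
    funext i
    have e1 : a * (α * (-β / (b * (α * δ - β * γ))) + β * (α / (b * (α * δ - β * γ)))) = 0 := by
      field_simp
      try ring
      try exact Or.inl (by ring)
    have e2 : b * (γ * (-β / (b * (α * δ - β * γ))) + δ * (α / (b * (α * δ - β * γ)))) = 1 := by
      rw [show b * (γ * (-β / (b * (α * δ - β * γ))) + δ * (α / (b * (α * δ - β * γ)))) =
        (b * (α * δ - β * γ)) / (b * (α * δ - β * γ)) by ring]
      exact div_self (mul_ne_zero hb0 hD)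
    rw [e1, e2]
    ring
  -- Rpᴴ * R fixes the range of R
  have hfix : ∀ v w : Fin n → ℂ, R.mulVec w = v → Rpᴴ.mulVec (R.mulVec v) = v := by
    intro v w hw
    calc Rpᴴ.mulVec (R.mulVec v) = (Rpᴴ * R).mulVec v := Matrix.mulVec_mulVec v Rpᴴ R
      _ = (R * Rp).mulVec v := by rw [hkey]
      _ = (R * Rp).mulVec (R.mulVec w) := by rw [hw]
      _ = ((R * Rp) * R).mulVec w := Matrix.mulVec_mulVec w (R * Rp) R
      _ = R.mulVec w := by rw [hP1]
      _ = v := hw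
  have hfixh : Rpᴴ.mulVec (R.mulVec h) = h := hfix h _ hwh
  have hfixh' : Rpᴴ.mulVec (R.mulVec h') = h' := hfix h' _ hwh'
  -- key scalars
  set s : ℂ := ∑ j, conj (h j) * Rpᴴ.mulVec h j with hs
  set t : ℂ := ∑ j, conj (h j) * Rpᴴ.mulVec h' j with ht
  clear_value s t
  -- linearity of mulVec
  have hlinmv : ∀ (c d : ℂ) (v w : Fin n → ℂ),
      Rpᴴ.mulVec (fun i => c * v i + d * w i) =
      fun i => c * Rpᴴ.mulVec v i + d * Rpᴴ.mulVec w i := by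
    intro c d v w
    funext i
    simp only [Matrix.mulVec, dotProduct]
    rw [Finset.mul_sum, Finset.mul_sum, ← Finset.sum_add_distrib]
    exact Finset.sum_congr rfl fun j _ => by ring
  -- vector equations
  have hRhv : R.mulVec h = fun i => (a * α) * h i + (b * γ) * h' i := by
    have e := hmvcd 1 0
    simpa using e
  have hRh'v : R.mulVec h' = fun i => (a * β) * h i + (b * δ) * h' i := by
    have e := hmvcd 0 1
    simpa using e
  have EQ1 : ∀ i, (a * α) * Rpᴴ.mulVec h i + (b * γ) * Rpᴴ.mulVec h' i = h i := by
    intro i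
    calc (a * α) * Rpᴴ.mulVec h i + (b * γ) * Rpᴴ.mulVec h' i
        = Rpᴴ.mulVec (fun j => (a * α) * h j + (b * γ) * h' j) i :=
          (congrFun (hlinmv (a * α) (b * γ) h h') i).symm
      _ = Rpᴴ.mulVec (R.mulVec h) i := by rw [← hRhv]
      _ = h i := congrFun hfixh i
  have EQ2 : ∀ i, (a * β) * Rpᴴ.mulVec h i + (b * δ) * Rpᴴ.mulVec h' i = h' i := by
    intro i
    calc (a * β) * Rpᴴ.mulVec h i + (b * δ) * Rpᴴ.mulVec h' i
        = Rpᴴ.mulVec (fun j => (a * β) * h j + (b * δ) * h' j) i :=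
          (congrFun (hlinmv (a * β) (b * δ) h h') i).symm
      _ = Rpᴴ.mulVec (R.mulVec h') i := by rw [← hRh'v]
      _ = h' i := congrFun hfixh' i
  -- scalar equations
  have S1 : (a * α) * s + (b * γ) * t = α := by
    rw [hs, ht, Finset.mul_sum, Finset.mul_sum, ← Finset.sum_add_distrib]
    calc ∑ i, ((a * α) * (conj (h i) * Rpᴴ.mulVec h i) +
          (b * γ) * (conj (h i) * Rpᴴ.mulVec h' i))
        = ∑ i, conj (h i) * ((a * α) * Rpᴴ.mulVec h i + (b * γ) * Rpᴴ.mulVec h' i) :=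
          Finset.sum_congr rfl fun i _ => by ring
      _ = ∑ i, conj (h i) * h i := Finset.sum_congr rfl fun i _ => by rw [EQ1 i]
      _ = α := hα.symm
  have S2 : (a * β) * s + (b * δ) * t = β := by
    rw [hs, ht, Finset.mul_sum, Finset.mul_sum, ← Finset.sum_add_distrib]
    calc ∑ i, ((a * β) * (conj (h i) * Rpᴴ.mulVec h i) +
          (b * δ) * (conj (h i) * Rpᴴ.mulVec h' i))
        = ∑ i, conj (h i) * ((a * β) * Rpᴴ.mulVec h i + (b * δ) * Rpᴴ.mulVec h' i) :=
          Finset.sum_congr rfl fun i _ => by ring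
      _ = ∑ i, conj (h i) * h' i := Finset.sum_congr rfl fun i _ => by rw [EQ2 i]
      _ = β := hβ.symm
  -- solve the 2x2 system
  have hsval : a * s = 1 := by
    have hcancel : (a * s) * (α * δ - β * γ) = 1 * (α * δ - β * γ) := by
      linear_combination δ * S1 - γ * S2
    exact mul_right_cancel₀ hD hcancel
  have htval : t = 0 := by
    have h0 : (b * (β * γ - α * δ)) * t = 0 := by
      linear_combination β * S1 - α * S2
    rcases mul_eq_zero.mp h0 with h1 | h1
    · exfalso
      rcases mul_eq_zero.mp h1 with h2 | h2
      · exact hb0 h2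
      · exact hD (by linear_combination -h2)
    · exact h1
  -- final computation
  refine Filter.Eventually.of_forall fun ω => ?_
  rw [hr, hYdef ω]
  have hermlin : ∀ G : Fin n → ℂ, herm G (x ω • h + x' ω • h') =
      x ω * herm G h + x' ω * herm G h' := by
    intro G
    simp only [herm, Pi.add_apply, Pi.smul_apply, smul_eq_mul, Finset.mul_sum,
      ← Finset.sum_add_distrib]
    exact Finset.sum_congr rfl fun i _ => by ring
  rw [hermlin]
  have hermswap : ∀ v : Fin n → ℂ, herm (Rp.mulVec fun i => a * h i) v =
      conj a * ∑ j, conj (h j) * Rpᴴ.mulVec v j := by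
    intro v
    simp only [herm, Matrix.mulVec, dotProduct, Matrix.conjTranspose_apply,
      Complex.star_def, _root_.map_sum, _root_.map_mul, Finset.mul_sum, Finset.sum_mul]
    rw [Finset.sum_comm]
    refine Finset.sum_congr rfl fun j _ => ?_
    refine Finset.sum_congr rfl fun i _ => ?_
    ring
  rw [hermswap h, hermswap h', hac, ← hs, ← ht, hsval, htval]
  ring
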